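/- Let F be a field and Ω a fixed algebraic closure of F. The set Inv(Gal(F)) = {σ ∈ Gal(F) : σ² = id and σ ≠ id} of involutions is a closed subset of the absolute Galois group Gal(F) equipped with the Krull topology. -/
import Mathlib


open Polynomial in
/-- A quadratic `z*z + b*z = d` always has a root in an algebraically closed field. -/
private lemma exists_quadratic_root {Ω : Type*} [Field Ω] [IsAlgClosed Ω] (b d : Ω) :
    ∃ z : Ω, z * z + b * z = d := by
  have hdeg : (X ^ 2 + C b * X - C d : Polynomial Ω).degree = 2 := by compute_degree!
  obtain ⟨z, hz⟩ := IsAlgClosed.exists_root (X ^ 2 + C b * X - C d) (by rw [hdeg]; norm_num)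
  refine ⟨z, ?_⟩
  simp [Polynomial.IsRoot] at hz
  linear_combination hz

/-- No involution of an algebraically closed field fixes a square root of `-1`. -/
private lemma involution_not_fix_i {F Ω : Type*} [Field F] [Field Ω] [Algebra F Ω]
    [IsAlgClosed Ω] {i : Ω} (hi : i * i = -1) {σ : Ω ≃ₐ[F] Ω}
    (hσ2 : σ * σ = 1) (hσi : σ i = i) : σ = 1 := by
  by_contra hσ1
  -- σ is an involution: σ (σ x) = x
  have hinv : ∀ x : Ω, σ (σ x) = x := fun x => by
    have := congrArg (fun τ : Ω ≃ₐ[F] Ω => τ x) hσ2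
    simpa [AlgEquiv.mul_apply] using this
  -- get a moved point
  obtain ⟨t, ht⟩ : ∃ t : Ω, σ t ≠ t := by
    by_contra h
    push_neg at h
    exact hσ1 (AlgEquiv.ext fun x => by simpa using h x)
  by_cases h2 : (2 : Ω) = 0
  · -- characteristic 2 case: Artin–Schreier style argument
    set s : Ω := t + σ t with hs_def
    have hσs : σ s = s := by rw [hs_def, map_add, hinv]; ring
    have hs0 : s ≠ 0 := by
      intro h
      rw [hs_def] at h
      exact ht (by linear_combination h - t * h2)
    set θ : Ω := t / s with hθ_def
    have hσθ : σ θ = θ + 1 := by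
      have hst : σ t = t + s := by rw [hs_def]; linear_combination (-t) * h2
      rw [hθ_def, map_div₀, hσs, hst]
      field_simp
    set a : Ω := θ * θ + θ with ha_def
    have hσa : σ a = a := by
      rw [ha_def, map_add, map_mul, hσθ]
      linear_combination (θ + 1) * h2
    obtain ⟨β, hβ⟩ := exists_quadratic_root (1 : Ω) (a * θ)
    rw [one_mul] at hβ
    have hβ' : σ β * σ β + σ β = a * (θ + 1) := by
      have := congrArg σ hβ
      rwa [map_add, map_mul, map_mul, hσa, hσθ] at this
    set y : Ω := β + σ β with hy_def
    have hσy : σ y = y := by rw [hy_def, map_add, hinv]; ring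
    have hy : y * y + y = a := by
      rw [hy_def]
      linear_combination hβ + hβ' + (a * θ + β * σ β) * h2
    -- (θ + y) * (θ + y + 1) = 0
    have ha' : θ * θ + θ = a := ha_def.symm
    have hfac : (θ + y) * (θ + y + 1) = 0 := by
      linear_combination hy + ha' + (a + θ * y) * h2
    have hθK : σ θ = θ := by
      rcases mul_eq_zero.mp hfac with h | h
      · have hθy : θ = -y := by linear_combination h
        rw [hθy, map_neg, hσy]
      · have hθy : θ = -y - 1 := by linear_combination h
        rw [hθy, map_sub, map_neg, hσy, map_one]
    rw [hσθ] at hθK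
    exact one_ne_zero (by linear_combination hθK : (1:Ω) = 0)
  · -- characteristic ≠ 2 case
    set α : Ω := t - σ t with hα_def
    have hσα : σ α = -α := by rw [hα_def, map_sub, hinv]; ring
    have hα0 : α ≠ 0 := fun h => ht (by rw [hα_def] at h; linear_combination -h)
    obtain ⟨β, hβ⟩ := exists_quadratic_root (0 : Ω) α
    rw [zero_mul, add_zero] at hβ
    set c : Ω := β * σ β with hc_def
    have hσc : σ c = c := by rw [hc_def, map_mul, hinv]; ring
    have hc2 : c * c = -(α * α) := by
      have hβ' : σ β * σ β = -α := by
        have := congrArg σ hβ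
        rwa [map_mul, hσα] at this
      rw [hc_def]
      linear_combination (σ β * σ β) * hβ + α * hβ'
    have hfac : (c - i * α) * (c + i * α) = 0 := by
      linear_combination hc2 - α * α * hi
    have hiα0 : i * α ≠ 0 := by
      apply mul_ne_zero _ hα0
      intro h
      rw [h, zero_mul] at hi
      exact one_ne_zero (by linear_combination hi : (1:Ω) = 0)
    rcases mul_eq_zero.mp hfac with h | h
    · have hcval : c = i * α := by linear_combination h
      have := hσc
      rw [hcval, map_mul, hσi, hσα] at this
      have h2iα : (2:Ω) * (i * α) = 0 := by linear_combination -this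
      rcases mul_eq_zero.mp h2iα with h' | h'
      · exact h2 h'
      · exact hiα0 h'
    · have hcval : c = -(i * α) := by linear_combination h
      have := hσc
      rw [hcval, map_neg, map_mul, hσi, hσα] at this
      have h2iα : (2:Ω) * (i * α) = 0 := by linear_combination this
      rcases mul_eq_zero.mp h2iα with h' | h'
      · exact h2 h'
      · exact hiα0 h'

/-- For a field `F` with algebraic closure `Ω`, the set of involutions
in the absolute Galois group `Gal(F) = Ω ≃ₐ[F] Ω` is closed in the Krull topology. -/
theorem isClosed_involutions_absoluteGaloisGroup
    (F Ω : Type*) [Field F] [Field Ω] [Algebra F Ω] [IsAlgClosure F Ω] :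
    IsClosed {σ : Ω ≃ₐ[F] Ω | σ * σ = 1 ∧ σ ≠ 1} := by
  haveI : IsAlgClosed Ω := IsAlgClosure.isAlgClosed F
  haveI : T2Space (Ω ≃ₐ[F] Ω) := krullTopology_t2
  obtain ⟨i, hi⟩ : ∃ i : Ω, i * i = -1 := by
    obtain ⟨i, hi⟩ := IsAlgClosed.exists_pow_nat_eq (-1 : Ω) (n := 2) (by norm_num)
    exact ⟨i, by rw [← hi]; ring⟩
  set E : IntermediateField F Ω := IntermediateField.adjoin F {i} with hE
  haveI : FiniteDimensional F E :=
    IntermediateField.adjoin.finiteDimensional (Algebra.IsIntegral.isIntegral i)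
  rw [← isOpen_compl_iff]
  have hcompl : {σ : Ω ≃ₐ[F] Ω | σ * σ = 1 ∧ σ ≠ 1}ᶜ
      = {σ : Ω ≃ₐ[F] Ω | σ * σ ≠ 1} ∪ (E.fixingSubgroup : Set (Ω ≃ₐ[F] Ω)) := by
    ext σ
    simp only [Set.mem_compl_iff, Set.mem_setOf_eq, Set.mem_union, SetLike.mem_coe,
      not_and_or, not_ne_iff]
    constructor
    · rintro (h | h)
      · exact Or.inl h
      · subst h; exact Or.inr (fun x => by simp)
    · rintro (h | h)
      · exact Or.inl h
      · by_cases hσ2 : σ * σ = 1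
        · refine Or.inr ?_
          exact involution_not_fix_i hi hσ2 (h ⟨i, IntermediateField.mem_adjoin_simple_self F i⟩)
        · exact Or.inl hσ2
  rw [hcompl]
  refine IsOpen.union ?_ (IntermediateField.fixingSubgroup_isOpen E)
  have hcont : Continuous fun σ : Ω ≃ₐ[F] Ω => σ * σ := continuous_id.mul continuous_id
  exact IsOpen.preimage hcont isOpen_compl_singleton
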